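/- Let u : ℂ → ℂ^N and let x₀ ∈ ℂ with x₀ ≠ a_i for all i = 1,…,q. Assume u has derivative (S + Σ_{i=1}^q (x₀ − a_i)⁻¹ A_i)·u(x₀) at x₀ (in the sense of HasDerivAt). For 1 ≤ i ≤ q define U_i(x) = (x − a_i)⁻¹ u(x). Then for each i the function U_i has at x₀ the derivative S·U_i(x₀) + (x₀ − a_i)⁻¹ (Σ_{k=1}^q A_k·U_k(x₀) − U_i(x₀)); that is, the tuple U = (U_1,…,U_q) satisfies the Birkhoff–Okubo normal form (x − T) dU/dx = (A − I + S^{⊕q}(x − T)) U at x₀, where T = diag(a_1 I_N, …, a_q I_N), A is the q×q block matrix each of whose block rows is (A_1 … A_q), and S^{⊕q} = diag(S,…,S). -/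

import Mathlib

open Matrix

lemma sum_mulVec_aux {q N : ℕ} (M : Fin q → Matrix (Fin N) (Fin N) ℂ) (v : Fin N → ℂ) :
    (∑ k, M k) *ᵥ v = ∑ k, M k *ᵥ v := by
  ext j
  simp only [Matrix.mulVec, dotProduct, Finset.sum_apply, Matrix.sum_apply,
    Finset.sum_mul]
  rw [Finset.sum_comm]

/-- Birkhoff–Okubo extension, one variable.
If `u` solves `du/dx = (S + Σ_i (x - a i)⁻¹ A_i) u` at `x₀` (with `x₀ ≠ a i` for all `i`),
then each `U i x = (x - a i)⁻¹ u x` satisfies, at `x₀`, the `i`-th row of the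
Birkhoff–Okubo normal form `(x - T) dU/dx = (A - I + S^{⊕q}(x - T)) U`. -/
theorem birkhoff_okubo_extension
    (N q : ℕ) (hN : 1 ≤ N) (hq : 1 ≤ q)
    (S : Matrix (Fin N) (Fin N) ℂ) (A : Fin q → Matrix (Fin N) (Fin N) ℂ)
    (a : Fin q → ℂ)
    (u : ℂ → Fin N → ℂ) (x₀ : ℂ)
    (hx₀ : ∀ i, x₀ ≠ a i)
    (hu : HasDerivAt u ((S + ∑ i, (x₀ - a i)⁻¹ • A i) *ᵥ u x₀) x₀)
    (U : Fin q → ℂ → Fin N → ℂ)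
    (hU : ∀ i x, U i x = (x - a i)⁻¹ • u x) :
    ∀ i, HasDerivAt (U i)
      (S *ᵥ U i x₀ + (x₀ - a i)⁻¹ • ((∑ k, (A k) *ᵥ U k x₀) - U i x₀)) x₀ := by
  intro i
  have hne : x₀ - a i ≠ 0 := sub_ne_zero.mpr (hx₀ i)
  have hf : HasDerivAt (fun x => (x - a i)⁻¹) (-1 / (x₀ - a i) ^ 2) x₀ := by
    have h0 := ((hasDerivAt_id x₀).sub_const (a i)).inv hne
    simp at h0
    exact h0
  have h : HasDerivAt (fun x => (x - a i)⁻¹ • u x)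
      ((x₀ - a i)⁻¹ • ((S + ∑ k, (x₀ - a k)⁻¹ • A k) *ᵥ u x₀)
        + (-1 / (x₀ - a i) ^ 2) • u x₀) x₀ := hf.smul hu
  have hUf : U i = fun x => (x - a i)⁻¹ • u x := funext (hU i)
  rw [hUf]
  simp only [hU]
  convert h using 1
  have hsq : (-1 / (x₀ - a i) ^ 2 : ℂ) = -((x₀ - a i)⁻¹ * (x₀ - a i)⁻¹) := by
    field_simp
  rw [hsq]
  simp only [Matrix.add_mulVec, Matrix.mulVec_smul, Matrix.smul_mulVec,
    sum_mulVec_aux, smul_sub, smul_add, Finset.smul_sum, smul_smul, neg_smul]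
  abel
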